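/- Restricted eigenvalue controls the projected Gram matrix. Let X ∈ ℝ^{n×p}, let S* ⊆ {1,…,p} with |S*| = k and 2k ≤ p, and define the restricted eigenvalue ρ_{2k} = min { ‖X_A v‖₂² / (n‖v‖₂²) : S* ⊆ A ⊆ {1,…,p}, |A| = 2k, v ∈ ℝ^{2k}, v ≠ 0 }. Let Ŝ ⊆ {1,…,p} satisfy |Ŝ ∪ S*| ≤ 2k and X_Ŝ of full column rank, and set B = S* \ Ŝ, assumed nonempty. Then for every v ∈ ℝ^{|B|}, vᵀ X_Bᵀ Π⊥[Ŝ] X_B v ≥ n ρ_{2k} ‖v‖₂²; in particular, the smallest eigenvalue of X_Bᵀ Π⊥[Ŝ] X_B is at least n ρ_{2k}. -/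

import Mathlib

open scoped RealInnerProductSpace

/-- `Π⊥[S] v`: the orthogonal projection of `v` onto the orthogonal complement of the
column span of the columns of `X` indexed by `S` (so `Π⊥[∅] = id`). -/
noncomputable def projPerp {n p : ℕ} (X : Fin p → EuclideanSpace ℝ (Fin n))
    (S : Finset (Fin p)) (v : EuclideanSpace ℝ (Fin n)) : EuclideanSpace ℝ (Fin n) :=
  v - ((Submodule.span ℝ (X '' ↑S)).orthogonalProjection v : EuclideanSpace ℝ (Fin n))

/-- Restricted eigenvalue
`ρ_{2k} = min { ‖X_A v‖²/(n‖v‖²) : S* ⊆ A ⊆ {1,…,p}, |A| = 2k, v ≠ 0 }`, where the vector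
`v ∈ ℝ^{2k}` is encoded as a vector of `ℝ^p` supported on `A`. -/
noncomputable def restrictedEig {n p : ℕ} (X : Fin p → EuclideanSpace ℝ (Fin n))
    (Sstar : Finset (Fin p)) (k : ℕ) : ℝ :=
  sInf { r : ℝ | ∃ A : Finset (Fin p), Sstar ⊆ A ∧ A.card = 2 * k ∧
    ∃ v : Fin p → ℝ, v ≠ 0 ∧ (∀ j ∉ A, v j = 0) ∧
      r = ‖(∑ j, v j • X j : EuclideanSpace ℝ (Fin n))‖ ^ 2 / ((n : ℝ) * ∑ j, v j ^ 2) }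

/-- Auxiliary: a sum over the whole index type of a `dite` supported on a finset
equals the sum over the subtype. -/
lemma sum_dite_subtype_aux {γ : Type*} [Fintype γ] [DecidableEq γ]
    {β : Type*} [AddCommMonoid β] (s : Finset γ) (f : {i // i ∈ s} → β) :
    ∑ j : γ, (if h : j ∈ s then f ⟨j, h⟩ else 0) = ∑ j ∈ s.attach, f j := by
  rw [← Finset.sum_subset (Finset.subset_univ s)
      (fun j _ hj => by rw [dif_neg hj]),
    ← Finset.sum_attach s (fun j => if h : j ∈ s then f ⟨j, h⟩ else 0)]
  exact Finset.sum_congr rfl fun j _ => by rw [dif_pos j.2]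

/-- **Restricted eigenvalue controls the projected Gram matrix.**  If `|S*| = k`,
`2k ≤ p`, `|Ŝ ∪ S*| ≤ 2k`, `X_Ŝ` has full column rank, and `B = S* \ Ŝ` is nonempty, then
for every `v`, `vᵀ X_Bᵀ Π⊥[Ŝ] X_B v ≥ n ρ_{2k} ‖v‖²`; in particular the smallest
eigenvalue of `X_Bᵀ Π⊥[Ŝ] X_B` is at least `n ρ_{2k}`. -/
theorem restricted_eig_controls_projected_gram {n p k : ℕ}
    (X : Fin p → EuclideanSpace ℝ (Fin n))
    (Sstar : Finset (Fin p)) (hk : Sstar.card = k) (h2k : 2 * k ≤ p)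
    (Shat : Finset (Fin p)) (hcard : (Shat ∪ Sstar).card ≤ 2 * k)
    (hShat : LinearIndependent ℝ (fun i : (Shat : Set (Fin p)) => X i))
    (B : Finset (Fin p)) (hB : B = Sstar \ Shat) (hBne : B.Nonempty)
    (v : {i : Fin p // i ∈ B} → ℝ) :
    ⟪(∑ j ∈ B.attach, v j • X j.1 : EuclideanSpace ℝ (Fin n)),
        projPerp X Shat (∑ j ∈ B.attach, v j • X j.1)⟫
      ≥ (n : ℝ) * restrictedEig X Sstar k * ∑ i ∈ B.attach, v i ^ 2 := by
  classical
  set K : Submodule ℝ (EuclideanSpace ℝ (Fin n)) := Submodule.span ℝ (X '' ↑Shat) with hKdef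
  set w : EuclideanSpace ℝ (Fin n) := ∑ j ∈ B.attach, v j • X j.1 with hwdef
  set Pw : EuclideanSpace ℝ (Fin n) := (K.orthogonalProjection w : EuclideanSpace ℝ (Fin n))
    with hPwdef
  have hpp : projPerp X Shat w = w - Pw := rfl
  -- inner product equals squared norm of the residual
  have hinner : ⟪w, projPerp X Shat w⟫ = ‖w - Pw‖ ^ 2 := by
    have hmem : w - Pw ∈ Kᗮ := Submodule.sub_starProjection_mem_orthogonal (K := K) w
    have hPmem : Pw ∈ K := (K.orthogonalProjection w).2
    have h0 : ⟪Pw, w - Pw⟫ = 0 := hmem Pw hPmem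
    have h1 : ⟪w, projPerp X Shat w⟫ = ⟪(w - Pw) + Pw, w - Pw⟫ := by
      rw [hpp, sub_add_cancel]
    rw [h1, inner_add_left, h0, add_zero, real_inner_self_eq_norm_sq]
  rw [hinner]
  -- the set defining the restricted eigenvalue consists of nonnegative reals
  set E := { r : ℝ | ∃ A : Finset (Fin p), Sstar ⊆ A ∧ A.card = 2 * k ∧
    ∃ u : Fin p → ℝ, u ≠ 0 ∧ (∀ j ∉ A, u j = 0) ∧
      r = ‖(∑ j, u j • X j : EuclideanSpace ℝ (Fin n))‖ ^ 2 / ((n : ℝ) * ∑ j, u j ^ 2) }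
    with hEdef
  have hEnonneg : ∀ r ∈ E, (0:ℝ) ≤ r := by
    rintro r ⟨A, -, -, u, -, -, rfl⟩
    exact div_nonneg (sq_nonneg _) (mul_nonneg (Nat.cast_nonneg n)
      (Finset.sum_nonneg fun j _ => sq_nonneg _))
  have hrho : restrictedEig X Sstar k = sInf E := rfl
  have hrho_nonneg : 0 ≤ restrictedEig X Sstar k := by
    rw [hrho]; exact Real.sInf_nonneg hEnonneg
  -- trivial cases
  rcases eq_or_ne v 0 with hv0 | hv0
  · simp [hv0, ge_iff_le, sq_nonneg]
  rcases Nat.eq_zero_or_pos n with hn0 | hn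
  · simp [hn0, sq_nonneg]
  -- express Pw as a combination of columns in Shat
  have hPmem : Pw ∈ K := (K.orthogonalProjection w).2
  have hPmem' : Pw ∈ Submodule.span ℝ (Set.range fun i : (Shat : Set (Fin p)) => X i) := by
    have h := hPmem
    rw [hKdef, Set.image_eq_range] at h
    exact h
  obtain ⟨α, hα⟩ := (Submodule.mem_span_range_iff_exists_fun ℝ).1 hPmem'
  -- the combined coefficient vector
  set u : Fin p → ℝ := fun j =>
    (if h : j ∈ B then v ⟨j, h⟩ else 0) - (if h : j ∈ Shat then α ⟨j, h⟩ else 0) with hudef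
  have hBsub : B ⊆ Sstar := by rw [hB]; exact Finset.sdiff_subset
  have hBShat : ∀ j ∈ B, j ∉ Shat := by
    intro j hj; rw [hB] at hj; exact (Finset.mem_sdiff.1 hj).2
  have huB : ∀ j : {i : Fin p // i ∈ B}, u j.1 = v j := by
    rintro ⟨j, hj⟩
    simp only [hudef, dif_pos hj, dif_neg (hBShat j hj), sub_zero]
  -- the combination equals the residual
  have hsum : (∑ j, u j • X j : EuclideanSpace ℝ (Fin n)) = w - Pw := by
    have h1 : (∑ j, (if h : j ∈ B then v ⟨j, h⟩ else 0) • X j : EuclideanSpace ℝ (Fin n))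
        = w := by
      rw [hwdef]
      rw [← sum_dite_subtype_aux B (fun j => v j • X j.1)]
      exact Finset.sum_congr rfl fun j _ => by split_ifs with h <;> simp
    have h2 : (∑ j, (if h : j ∈ Shat then α ⟨j, h⟩ else 0) • X j : EuclideanSpace ℝ (Fin n))
        = Pw := by
      rw [← hα]
      have e : ∑ i : (Shat : Set (Fin p)), α i • X i.1
          = ∑ j ∈ Shat.attach, α ⟨j.1, j.2⟩ • X j.1 := rfl
      rw [e, ← sum_dite_subtype_aux Shat (fun j => α ⟨j.1, j.2⟩ • X j.1)]
      exact Finset.sum_congr rfl fun j _ => by split_ifs with h <;> simp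
    simp only [hudef, sub_smul]
    rw [Finset.sum_sub_distrib, h1, h2]
  -- u is nonzero
  obtain ⟨i0, hi0⟩ : ∃ i, v i ≠ 0 := by
    by_contra h; push_neg at h; exact hv0 (funext h)
  have hu0 : u ≠ 0 := fun h => hi0 (by rw [← huB i0, h]; rfl)
  -- the sum of squares of u dominates that of v
  have husq : ∑ i ∈ B.attach, v i ^ 2 ≤ ∑ j, u j ^ 2 := by
    have e1 : ∑ i ∈ B.attach, v i ^ 2 = ∑ j ∈ B, u j ^ 2 := by
      rw [← Finset.sum_attach B (fun j => u j ^ 2)]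
      exact Finset.sum_congr rfl fun j _ => by rw [huB j]
    rw [e1]
    exact Finset.sum_le_sum_of_subset_of_nonneg (Finset.subset_univ B)
      (fun i _ _ => sq_nonneg _)
  have husq_pos : 0 < ∑ j, u j ^ 2 := by
    have : ∃ j, u j ≠ 0 := by
      by_contra h; push_neg at h; exact hu0 (funext h)
    obtain ⟨j0, hj0⟩ := this
    exact Finset.sum_pos' (fun j _ => sq_nonneg _)
      ⟨j0, Finset.mem_univ j0, pow_two_pos_of_ne_zero hj0⟩
  -- choose the superset A
  obtain ⟨A, hA, hAcard⟩ := Finset.exists_superset_card_eq hcard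
    (by simpa using h2k)
  have husupp : ∀ j ∉ A, u j = 0 := by
    intro j hj
    have hjB : j ∉ B := fun h =>
      hj (hA (Finset.mem_union_right _ (hBsub h)))
    have hjS : j ∉ Shat := fun h => hj (hA (Finset.mem_union_left _ h))
    simp only [hudef, dif_neg hjB, dif_neg hjS, sub_zero]
  -- membership in the defining set
  have hmemE : ‖(∑ j, u j • X j : EuclideanSpace ℝ (Fin n))‖ ^ 2 / ((n : ℝ) * ∑ j, u j ^ 2)
      ∈ E := ⟨A, (Finset.subset_union_right).trans hA, hAcard, u, hu0, husupp, rfl⟩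
  have hle : restrictedEig X Sstar k
      ≤ ‖(∑ j, u j • X j : EuclideanSpace ℝ (Fin n))‖ ^ 2 / ((n : ℝ) * ∑ j, u j ^ 2) := by
    rw [hrho]; exact csInf_le ⟨0, fun r hr => hEnonneg r hr⟩ hmemE
  have hnpos : (0:ℝ) < (n : ℝ) * ∑ j, u j ^ 2 :=
    mul_pos (by exact_mod_cast hn) husq_pos
  have hkey : (n : ℝ) * restrictedEig X Sstar k * ∑ j, u j ^ 2 ≤ ‖w - Pw‖ ^ 2 := by
    have := mul_le_mul_of_nonneg_right hle hnpos.le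
    rw [div_mul_cancel₀ _ hnpos.ne'] at this
    calc (n : ℝ) * restrictedEig X Sstar k * ∑ j, u j ^ 2
        = restrictedEig X Sstar k * ((n : ℝ) * ∑ j, u j ^ 2) := by ring
      _ ≤ ‖(∑ j, u j • X j : EuclideanSpace ℝ (Fin n))‖ ^ 2 := this
      _ = ‖w - Pw‖ ^ 2 := by rw [hsum]
  refine le_trans ?_ hkey
  have : restrictedEig X Sstar k * ∑ i ∈ B.attach, v i ^ 2
      ≤ restrictedEig X Sstar k * ∑ j, u j ^ 2 :=
    mul_le_mul_of_nonneg_left husq hrho_nonneg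
  calc (n : ℝ) * restrictedEig X Sstar k * ∑ i ∈ B.attach, v i ^ 2
      = (n : ℝ) * (restrictedEig X Sstar k * ∑ i ∈ B.attach, v i ^ 2) := by ring
    _ ≤ (n : ℝ) * (restrictedEig X Sstar k * ∑ j, u j ^ 2) :=
        mul_le_mul_of_nonneg_left this (Nat.cast_nonneg n)
    _ = (n : ℝ) * restrictedEig X Sstar k * ∑ j, u j ^ 2 := by ring
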